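/- Let G be a nontrivial linearly ordered abelian group and let D be a divisible linearly ordered abelian group containing G as an ordered subgroup such that every element of D has a positive integer multiple lying in G (so D is a divisible hull of G). Then G is a closed subset of D with respect to the order topology on D if and only if for every n ∈ ℕ and every a ∈ G the following holds: if for every b ∈ G with b > 0 there exists g ∈ G with |a − n·g| < b, then a is n-divisible in G (i.e. a = n·h for some h ∈ G). -/

import Mathlib

private lemma abs_nsmul' {D : Type*} [AddCommGroup D] [LinearOrder D] [IsOrderedAddMonoid D] (n : ℕ) (x : D) :
    |n • x| = n • |x| := by
  rcases le_total 0 x with hx | hx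
  · rw [abs_of_nonneg hx, abs_of_nonneg (nsmul_nonneg hx n)]
  · rw [abs_of_nonpos hx, abs_of_nonpos (nsmul_nonpos hx n), neg_nsmul]

private lemma abs_mem' {D : Type*} [AddCommGroup D] [LinearOrder D] [IsOrderedAddMonoid D] {G : AddSubgroup D}
    {x : D} (hx : x ∈ G) : |x| ∈ G := by
  rcases abs_choice x with h | h
  · rwa [h]
  · rw [h]; exact neg_mem hx

theorem stmt3 {D : Type*} [AddCommGroup D] [LinearOrder D] [IsOrderedAddMonoid D]
    [TopologicalSpace D] [OrderTopology D]
    (hdiv : ∀ d : D, ∀ n : ℕ, 0 < n → ∃ e : D, n • e = d)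
    (G : AddSubgroup D) (hnt : G ≠ ⊥)
    (hhull : ∀ d : D, ∃ m : ℕ, 0 < m ∧ m • d ∈ G) :
    IsClosed (G : Set D) ↔
      ∀ n : ℕ, 0 < n → ∀ a ∈ G,
        (∀ b ∈ G, 0 < b → ∃ g ∈ G, |a - n • g| < b) →
        ∃ h ∈ G, a = n • h := by
  -- D is nontrivial
  have hDnt : Nontrivial D := by
    rcases AddSubgroup.bot_or_exists_ne_zero G with h | ⟨x, _, hx⟩
    · exact absurd h hnt
    · exact ⟨⟨x, 0, hx⟩⟩
  -- existence of a minimal positive element when G⁺ is bounded away from 0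
  have minpos : ∀ c : D, 0 < c → (∀ b ∈ G, 0 < b → c < b) →
      ∃ μ ∈ G, 0 < μ ∧ ∀ b ∈ G, 0 < b → μ ≤ b := by
    intro c hc hcb
    by_contra hno
    push_neg at hno
    have key : ∀ j : ℕ, ∀ b ∈ G, 0 < b → (2 ^ j) • c < b := by
      intro j
      induction j with
      | zero => simpa using hcb
      | succ j ih =>
        intro b hb hbpos
        obtain ⟨b', hb'G, hb'pos, hb'lt⟩ := hno b hb hbpos
        have h1 := ih b' hb'G hb'pos
        have h2 := ih (b - b') (sub_mem hb hb'G) (sub_pos.2 hb'lt)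
        have hp : (2 : ℕ) ^ (j + 1) = 2 ^ j + 2 ^ j := by rw [pow_succ]; ring
        rw [hp, add_nsmul]
        have h3 := add_lt_add h1 h2
        have h4 : b' + (b - b') = b := by abel
        rwa [h4] at h3
    obtain ⟨m, hm, hmc⟩ := hhull c
    have h1 : (2 ^ m) • c < m • c := key m (m • c) hmc (nsmul_pos hc hm.ne')
    have h2 : m • c ≤ (2 ^ m) • c := nsmul_le_nsmul_left hc.le (Nat.lt_two_pow_self (n := m)).le
    exact absurd h1 (not_lt.2 h2)
  constructor
  · -- closed → divisibility criterion
    intro hclosed n hn a haG H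
    obtain ⟨e, he⟩ := hdiv a n hn
    by_cases heG : e ∈ G
    · exact ⟨e, heG, he.symm⟩
    exfalso
    have hne : e ∉ closure (G : Set D) := by rwa [hclosed.closure_eq]
    rw [mem_closure_iff_nhds_basis (nhds_basis_abs_sub_lt e)] at hne
    push_neg at hne
    obtain ⟨ε, hε, hsep⟩ := hne
    have hfar : ∀ g ∈ G, ε ≤ |e - g| := by
      intro g hg
      rw [abs_sub_comm]
      exact not_lt.1 (hsep g hg)
    have hcb : ∀ b ∈ G, 0 < b → ε < b := by
      intro b hb hbpos
      obtain ⟨g, hg, hlt⟩ := H b hb hbpos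
      have h1 : a - n • g = n • (e - g) := by rw [smul_sub, he]
      have h2 : |e - g| ≤ |a - n • g| := by
        rw [h1, abs_nsmul']
        calc |e - g| = 1 • |e - g| := (one_smul ℕ _).symm
          _ ≤ n • |e - g| := nsmul_le_nsmul_left (abs_nonneg _) hn
      exact lt_of_le_of_lt (le_trans (hfar g hg) h2) hlt
    obtain ⟨μ, hμG, hμpos, hmin⟩ := minpos ε hε hcb
    obtain ⟨g, hg, hlt⟩ := H μ hμG hμpos
    have hx : a - n • g ∈ G := sub_mem haG (nsmul_mem hg n)
    have hxz : a - n • g = 0 := by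
      by_contra hxne
      exact absurd hlt (not_lt.2 (hmin _ (abs_mem' hx) (abs_pos.2 hxne)))
    have hag : a = n • g := sub_eq_zero.1 hxz
    have : n • e = n • g := he.trans hag
    have heg : e = g := (nsmul_right_strictMono hn.ne').injective this
    exact heG (heg ▸ hg)
  · -- divisibility criterion → closed
    intro H
    rw [← closure_subset_iff_isClosed]
    intro d hd
    obtain ⟨m, hm, hmd⟩ := hhull d
    rw [mem_closure_iff_nhds_basis (nhds_basis_abs_sub_lt d)] at hd
    have happrox : ∀ b ∈ G, 0 < b → ∃ g ∈ G, |m • d - m • g| < b := by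
      intro b hb hbpos
      obtain ⟨ε, hε⟩ := hdiv b m hm
      have hεpos : 0 < ε := by
        by_contra hle
        push_neg at hle
        have : m • ε ≤ 0 := nsmul_nonpos hle m
        rw [hε] at this
        exact absurd hbpos (not_lt.2 this)
      obtain ⟨g, hg, hmem⟩ := hd ε hεpos
      refine ⟨g, hg, ?_⟩
      have h1 : |d - g| < ε := by rwa [abs_sub_comm]
      calc |m • d - m • g| = |m • (d - g)| := by rw [smul_sub]
        _ = m • |d - g| := abs_nsmul' m _
        _ < m • ε := nsmul_lt_nsmul_right hm.ne' h1
        _ = b := hε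
    obtain ⟨h, hhG, hmh⟩ := H m hm (m • d) hmd (by simpa using happrox)
    have : d = h := (nsmul_right_strictMono hm.ne').injective hmh
    exact this ▸ hhG
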